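/- Let Q be an algebraic curvature tensor on an n-dimensional inner product space (n≥3). Define s(Q)=tr_g(c(Q)), h(Q)=c(Q)-(1/n)s(Q)g, and weyl(Q)=Q+(1/(n-2))h(Q)⧢g+(1/(2n(n-1)))s(Q)·g⧢g. Then the three summands in Q = -(1/(2n(n-1)))s(Q)·g⧢g - (1/(n-2))h(Q)⧢g + weyl(Q) are pairwise orthogonal with respect to the natural inner product on (4,0)-tensors. -/

import Mathlib

open Finset

def gdelta (n : ℕ) : Fin n → Fin n → ℝ := fun i j => if i = j then 1 else 0

def kn {n : ℕ} (h k : Fin n → Fin n → ℝ) : Fin n → Fin n → Fin n → Fin n → ℝ :=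
  fun X Y Z W => h X Z * k Y W + h Y W * k X Z - h X W * k Y Z - h Y Z * k X W

def ric {n : ℕ} (Q : Fin n → Fin n → Fin n → Fin n → ℝ) : Fin n → Fin n → ℝ :=
  fun X Y => ∑ i, Q i X Y i

def tr2 {n : ℕ} (k : Fin n → Fin n → ℝ) : ℝ := ∑ i, k i i

def inner4 {n : ℕ} (P Q : Fin n → Fin n → Fin n → Fin n → ℝ) : ℝ :=
  ∑ i, ∑ j, ∑ k, ∑ l, P i j k l * Q i j k l

noncomputable def bianchiMap {n : ℕ} (Q : Fin n → Fin n → Fin n → Fin n → ℝ) :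
    Fin n → Fin n → Fin n → Fin n → ℝ :=
  fun X Y Z W => (1 / 3 : ℝ) * (Q X Y Z W + Q Y Z X W + Q Z X Y W)

lemma sum_kn_delta {n : ℕ} (a : Fin n → Fin n → ℝ) (T : Fin n → Fin n → Fin n → Fin n → ℝ) :
    inner4 (kn a (gdelta n)) T =
      ((∑ i, ∑ j, ∑ k, a i k * T i j k j) + (∑ i, ∑ j, ∑ l, a j l * T i j i l))
        - (∑ i, ∑ j, ∑ l, a i l * T i j j l) - (∑ i, ∑ j, ∑ k, a j k * T i j k i) := by
  unfold inner4 kn gdelta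
  simp only [add_mul, sub_mul, ite_mul, mul_ite, one_mul, zero_mul, mul_one, mul_zero,
    Finset.sum_add_distrib, Finset.sum_sub_distrib, Finset.sum_ite_irrel, Finset.sum_const_zero,
    Finset.sum_ite_eq, Finset.sum_ite_eq', Finset.mem_univ, if_true]

lemma inner4_cc {n : ℕ} (c d : ℝ) (P T : Fin n → Fin n → Fin n → Fin n → ℝ) :
    inner4 (fun X Y Z W => c * P X Y Z W) (fun X Y Z W => d * T X Y Z W)
      = (c * d) * inner4 P T := by
  simp only [inner4, Finset.mul_sum]
  refine Finset.sum_congr rfl fun i _ => Finset.sum_congr rfl fun j _ =>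
    Finset.sum_congr rfl fun k _ => Finset.sum_congr rfl fun l _ => by ring

lemma inner4_cr {n : ℕ} (c : ℝ) (P T : Fin n → Fin n → Fin n → Fin n → ℝ) :
    inner4 (fun X Y Z W => c * P X Y Z W) T = c * inner4 P T := by
  simp only [inner4, Finset.mul_sum]
  refine Finset.sum_congr rfl fun i _ => Finset.sum_congr rfl fun j _ =>
    Finset.sum_congr rfl fun k _ => Finset.sum_congr rfl fun l _ => by ring

lemma sum_rot {n : ℕ} (f : Fin n → Fin n → Fin n → ℝ) :
    (∑ i, ∑ j, ∑ k, f i j k) = ∑ j, ∑ k, ∑ i, f i j k := by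
  rw [Finset.sum_comm]
  exact Finset.sum_congr rfl fun j _ => Finset.sum_comm

lemma sum_swap23 {n : ℕ} (f : Fin n → Fin n → Fin n → ℝ) :
    (∑ i, ∑ j, ∑ k, f i j k) = ∑ i, ∑ k, ∑ j, f i j k :=
  Finset.sum_congr rfl fun _ _ => Finset.sum_comm

/-- Ricci decomposition of an algebraic curvature tensor: the scalar part, the
trace-free Ricci part and the Weyl part are pairwise orthogonal. -/
theorem stmt_6 {n : ℕ} (hn : 3 ≤ n) (Q : Fin n → Fin n → Fin n → Fin n → ℝ)
    (h12 : ∀ X Y Z W, Q X Y Z W = -(Q Y X Z W))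
    (h34 : ∀ X Y Z W, Q X Y Z W = -(Q X Y W Z))
    (hpair : ∀ X Y Z W, Q X Y Z W = Q Z W X Y)
    (hbianchi : bianchiMap Q = 0) :
    let s : ℝ := tr2 (ric Q)
    let h : Fin n → Fin n → ℝ := fun X Y => ric Q X Y - (1 / (n : ℝ)) * s * gdelta n X Y
    let A : Fin n → Fin n → Fin n → Fin n → ℝ :=
      fun X Y Z W => -(1 / (2 * (n : ℝ) * ((n : ℝ) - 1))) * s * kn (gdelta n) (gdelta n) X Y Z W
    let B : Fin n → Fin n → Fin n → Fin n → ℝ :=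
      fun X Y Z W => -(1 / ((n : ℝ) - 2)) * kn h (gdelta n) X Y Z W
    let C : Fin n → Fin n → Fin n → Fin n → ℝ :=
      fun X Y Z W => Q X Y Z W + (1 / ((n : ℝ) - 2)) * kn h (gdelta n) X Y Z W
        + (1 / (2 * (n : ℝ) * ((n : ℝ) - 1))) * s * kn (gdelta n) (gdelta n) X Y Z W
    inner4 A B = 0 ∧ inner4 A C = 0 ∧ inner4 B C = 0 := by
  intro s h A B C
  have h3 : (3 : ℝ) ≤ (n : ℝ) := by exact_mod_cast hn
  have hn0 : (n : ℝ) ≠ 0 := by intro e; rw [e] at h3; linarith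
  have hn1 : (n : ℝ) - 1 ≠ 0 := by intro e; nlinarith [e]
  have hn2 : (n : ℝ) - 2 ≠ 0 := by intro e; nlinarith [e]
  -- trace of h is zero
  have htr : (∑ i, h i i) = 0 := by
    have : (∑ i, h i i) = (∑ i, ric Q i i) - ∑ i, (1 / (n : ℝ)) * s * gdelta n i i := by
      simp [h, Finset.sum_sub_distrib]
    rw [this]
    have h1 : (∑ i, ric Q i i) = s := rfl
    have h2 : (∑ i : Fin n, (1 / (n : ℝ)) * s * gdelta n i i) = (n : ℝ) * ((1 / (n : ℝ)) * s) := by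
      simp [gdelta, Finset.sum_const, Finset.card_univ, nsmul_eq_mul]
    rw [h1, h2]
    field_simp
    ring
  -- contraction of kn a (gdelta n)
  have hknc : ∀ (a : Fin n → Fin n → ℝ) (X Y : Fin n),
      (∑ i, kn a (gdelta n) i X Y i)
        = (2 - (n : ℝ)) * a X Y - (∑ i, a i i) * gdelta n X Y := by
    intro a X Y
    unfold kn gdelta
    simp only [mul_ite, ite_mul, mul_one, mul_zero, one_mul, zero_mul,
      Finset.sum_sub_distrib, Finset.sum_add_distrib, Finset.sum_ite_irrel,
      Finset.sum_const_zero, Finset.sum_ite_eq, Finset.sum_ite_eq',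
      Finset.mem_univ, if_true, Finset.sum_const, Finset.card_univ, Fintype.card_fin,
      nsmul_eq_mul]
    split_ifs <;> ring
  -- ricci contraction of C vanishes
  have hricC : ∀ X Y : Fin n, (∑ i, C i X Y i) = 0 := by
    intro X Y
    have : (∑ i, C i X Y i) = (∑ i, Q i X Y i)
        + (1 / ((n : ℝ) - 2)) * (∑ i, kn h (gdelta n) i X Y i)
        + (1 / (2 * (n : ℝ) * ((n : ℝ) - 1))) * s * (∑ i, kn (gdelta n) (gdelta n) i X Y i) := by
      simp only [C, Finset.sum_add_distrib, Finset.mul_sum]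
    rw [this, hknc, hknc, htr]
    have hRic : (∑ i, Q i X Y i) = ric Q X Y := rfl
    have hgd : (∑ i : Fin n, gdelta n i i) = (n : ℝ) := by
      simp [gdelta, Finset.sum_const, Finset.card_univ]
    rw [hRic, hgd]
    have hhXY : h X Y = ric Q X Y - (1 / (n : ℝ)) * s * gdelta n X Y := rfl
    rw [hhXY]
    field_simp
    ring
  -- symmetries of C
  have hC12 : ∀ X Y Z W, C X Y Z W = -(C Y X Z W) := by
    intro X Y Z W
    simp only [C, kn]
    rw [h12 X Y Z W]; ring
  have hC34 : ∀ X Y Z W, C X Y Z W = -(C X Y W Z) := by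
    intro X Y Z W
    simp only [C, kn]
    rw [h34 X Y Z W]; ring
  -- auxiliary contractions of C
  have k1 : ∀ i k : Fin n, (∑ j, C i j k j) = 0 := by
    intro i k
    have : (∑ j, C i j k j) = ∑ j, -(C j i k j) :=
      Finset.sum_congr rfl fun j _ => hC12 i j k j
    rw [this, Finset.sum_neg_distrib, hricC i k, neg_zero]
  have k2 : ∀ i l : Fin n, (∑ j, C i j j l) = 0 := by
    intro i l
    have : (∑ j, C i j j l) = ∑ j, C j i l j := by
      refine Finset.sum_congr rfl fun j _ => ?_
      rw [hC34 i j j l, hC12 i j l j]; ring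
    rw [this, hricC i l]
  have k3 : ∀ j l : Fin n, (∑ i, C i j i l) = 0 := by
    intro j l
    have : (∑ i, C i j i l) = ∑ i, -(C i j l i) :=
      Finset.sum_congr rfl fun i _ => hC34 i j i l
    rw [this, Finset.sum_neg_distrib, hricC j l, neg_zero]
  -- inner4 of kn a (gdelta n) with C is zero for any a
  have hknC : ∀ a : Fin n → Fin n → ℝ, inner4 (kn a (gdelta n)) C = 0 := by
    intro a
    rw [sum_kn_delta]
    have t1 : (∑ i, ∑ j, ∑ k, a i k * C i j k j) = 0 := by
      rw [sum_swap23]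
      refine Finset.sum_eq_zero fun i _ => Finset.sum_eq_zero fun k _ => ?_
      rw [← Finset.mul_sum, k1 i k, mul_zero]
    have t2 : (∑ i, ∑ j, ∑ l, a j l * C i j i l) = 0 := by
      rw [sum_rot]
      refine Finset.sum_eq_zero fun j _ => Finset.sum_eq_zero fun l _ => ?_
      rw [← Finset.mul_sum, k3 j l, mul_zero]
    have t3 : (∑ i, ∑ j, ∑ l, a i l * C i j j l) = 0 := by
      rw [sum_swap23]
      refine Finset.sum_eq_zero fun i _ => Finset.sum_eq_zero fun l _ => ?_
      rw [← Finset.mul_sum, k2 i l, mul_zero]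
    have t4 : (∑ i, ∑ j, ∑ k, a j k * C i j k i) = 0 := by
      rw [sum_rot]
      refine Finset.sum_eq_zero fun j _ => Finset.sum_eq_zero fun k _ => ?_
      rw [← Finset.mul_sum, hricC j k, mul_zero]
    rw [t1, t2, t3, t4]; ring
  refine ⟨?_, ?_, ?_⟩
  · -- inner4 A B = 0
    have hAB : inner4 A B
        = ((-(1 / (2 * (n : ℝ) * ((n : ℝ) - 1))) * s) * (-(1 / ((n : ℝ) - 2))))
          * inner4 (kn (gdelta n) (gdelta n)) (kn h (gdelta n)) := inner4_cc _ _ _ _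
    rw [hAB]
    have X0 : (∑ i : Fin n, ∑ j, kn h (gdelta n) i j i j) = 0 := by
      have e : ∀ i : Fin n, (∑ j, kn h (gdelta n) i j i j)
          = ((n : ℝ) - 2) * h i i + ∑ m, h m m := by
        intro i
        have flip : (∑ j, kn h (gdelta n) i j i j) = -∑ j, kn h (gdelta n) j i i j := by
          rw [← Finset.sum_neg_distrib]
          exact Finset.sum_congr rfl fun j _ => by simp only [kn]; ring
        rw [flip, hknc h i i, show gdelta n i i = 1 by simp [gdelta], mul_one]
        ring
      rw [Finset.sum_congr rfl fun i _ => e i, Finset.sum_add_distrib,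
        ← Finset.mul_sum, htr, mul_zero, zero_add]
      simp [htr]
    have Y0 : (∑ i : Fin n, ∑ j, kn h (gdelta n) i j j i) = 0 := by
      have : (∑ i : Fin n, ∑ j, kn h (gdelta n) i j j i)
          = -∑ i : Fin n, ∑ j, kn h (gdelta n) i j i j := by
        rw [← Finset.sum_neg_distrib]
        refine Finset.sum_congr rfl fun i _ => ?_
        rw [← Finset.sum_neg_distrib]
        exact Finset.sum_congr rfl fun j _ => by simp only [kn]; ring
      rw [this, X0, neg_zero]
    have d1 : ∀ T : Fin n → Fin n → Fin n → Fin n → ℝ,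
        (∑ i, ∑ j, ∑ k, gdelta n i k * T i j k j) = ∑ i, ∑ j, T i j i j := by
      intro T
      simp [gdelta, ite_mul, Finset.sum_ite_eq, Finset.sum_ite_eq']
    have d2 : ∀ T : Fin n → Fin n → Fin n → Fin n → ℝ,
        (∑ i, ∑ j, ∑ l, gdelta n j l * T i j i l) = ∑ i, ∑ j, T i j i j := by
      intro T
      simp [gdelta, ite_mul, Finset.sum_ite_eq, Finset.sum_ite_eq']
    have d3 : ∀ T : Fin n → Fin n → Fin n → Fin n → ℝ,
        (∑ i, ∑ j, ∑ l, gdelta n i l * T i j j l) = ∑ i, ∑ j, T i j j i := by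
      intro T
      simp [gdelta, ite_mul, Finset.sum_ite_eq, Finset.sum_ite_eq']
    have d4 : ∀ T : Fin n → Fin n → Fin n → Fin n → ℝ,
        (∑ i, ∑ j, ∑ k, gdelta n j k * T i j k i) = ∑ i, ∑ j, T i j j i := by
      intro T
      simp [gdelta, ite_mul, Finset.sum_ite_eq, Finset.sum_ite_eq']
    have key : inner4 (kn (gdelta n) (gdelta n)) (kn h (gdelta n)) = 0 := by
      rw [sum_kn_delta, d1, d2, d3, d4, X0, Y0]
      ring
    rw [key, mul_zero]
  · -- inner4 A C = 0
    have hAC : inner4 A C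
        = (-(1 / (2 * (n : ℝ) * ((n : ℝ) - 1))) * s)
          * inner4 (kn (gdelta n) (gdelta n)) C := inner4_cr _ _ _
    rw [hAC, hknC, mul_zero]
  · -- inner4 B C = 0
    have hBC : inner4 B C
        = (-(1 / ((n : ℝ) - 2))) * inner4 (kn h (gdelta n)) C := inner4_cr _ _ _
    rw [hBC, hknC, mul_zero]
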